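/- arXiv:2107.12738 — 2 statements merged into one kernel-verified Lean document; each statement's English description precedes it below -/
import Mathlib

section
/- For every linear functional φ on ℝ^d with |φ(x)| ≤ ‖x‖ for all x ∈ ℝ^d, there exist ε, δ > 0 such that for each j ∈ {0,1} and all θ ∈ 𝒞 with ‖θ − θ^{1−j}‖ ≥ ε, one has |Φ(θ)/Φ(θ^j)| ≤ exp(−δ ‖θ − θ^j‖²), where θ⁰ := (0,…,0) and θ¹ := (π,…,π). -/
open MeasureTheory ProbabilityTheory Filter Topology

noncomputable section

namespace DPoly

/-- The set of unit steps of the simple symmetric random walk on `ℤ^d`. -/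
def steps (d : ℕ) : Finset (Fin d → ℤ) :=
  (Finset.univ ×ˢ ({-1, 1} : Finset ℤ)).image fun p => Pi.single p.1 p.2

/-- Increment sequences of length `n`. -/
def paths (d n : ℕ) : Finset (Fin n → Fin d → ℤ) :=
  Fintype.piFinset fun _ => steps d

/-- `q d t z`: the `t`-step transition probability of the simple symmetric
random walk on `ℤ^d` from `0` to `z`, i.e. `(2d)⁻ᵗ` times the number of
nearest-neighbour paths of length `t` from `0` to `z`. -/
def q (d t : ℕ) (z : Fin d → ℤ) : ℝ :=
  ((paths d t).filter fun δ => ∑ j, δ j = z).card / (2 * d) ^ t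

/-- Euclidean norm of a real vector. -/
def enormR {d : ℕ} (x : Fin d → ℝ) : ℝ := Real.sqrt (∑ i, x i ^ 2)

/-- Euclidean norm of an integer vector. -/
def enormZ {d : ℕ} (x : Fin d → ℤ) : ℝ := enormR fun i => (x i : ℝ)

/-- `1`-norm of an integer vector. -/
def onormZ {d : ℕ} (x : Fin d → ℤ) : ℤ := ∑ i, |x i|

/-- `α_d = ∑_{t ≥ 1} ∑_z (q_t^z)²`. -/
def alphaD (d : ℕ) : ℝ := ∑' t : ℕ, ∑' z : Fin d → ℤ, q d (t + 1) z ^ 2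

variable {Ω : Type*} [MeasureSpace Ω] {d : ℕ}

/-- `c(β) = ⟨exp (β ξ(0,0))⟩`. -/
def cB (ξ : (Fin d → ℤ) → ℤ → Ω → ℝ) (β : ℝ) : ℝ := ∫ ω, Real.exp (β * ξ 0 0 ω)

/-- `λ = c(2β)/c(β)² - 1`. -/
def lam (ξ : (Fin d → ℤ) → ℤ → Ω → ℝ) (β : ℝ) : ℝ := cB ξ (2 * β) / cB ξ β ^ 2 - 1

/-- `h(z,i) = (exp (β ξ(z,i)) - c(β))/c(β)`. -/
def hfun (ξ : (Fin d → ℤ) → ℤ → Ω → ℝ) (β : ℝ) (z : Fin d → ℤ) (i : ℤ) (ω : Ω) : ℝ :=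
  (Real.exp (β * ξ z i ω) - cB ξ β) / cB ξ β

/-- Position after `j` steps of the walk with increments `δ` started at `x`. -/
def pos (x : Fin d → ℤ) {n : ℕ} (δ : Fin n → Fin d → ℤ) (j : ℕ) : Fin d → ℤ :=
  x + ∑ k ∈ Finset.univ.filter fun k : Fin n => (k : ℕ) < j, δ k

/-- The point-to-point partition function `Z_{x,s}^{y,t}`; it equals
`c(β)^{-(t-s+1)} q_{t-s}^{y-x} E_{x,s}^{y,t}[exp (β ∑_{j=s}^t ξ(γ_j,j))]`,
the conditional expectation being the uniform average over all
nearest-neighbour paths from `(x,s)` to `(y,t)`. -/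
def Zpp (ξ : (Fin d → ℤ) → ℤ → Ω → ℝ) (β : ℝ) (x : Fin d → ℤ) (s : ℤ) (y : Fin d → ℤ)
    (t : ℤ) (ω : Ω) : ℝ :=
  (cB ξ β ^ ((t - s).toNat + 1))⁻¹ * ((2 * d : ℝ) ^ (t - s).toNat)⁻¹ *
    ∑ δ ∈ (paths d (t - s).toNat).filter fun δ => x + ∑ j, δ j = y,
      Real.exp (β * ∑ j ∈ Finset.range ((t - s).toNat + 1), ξ (pos x δ j) (s + j) ω)

/-- `Z_{x,s}^t = ∑_y Z_{x,s}^{y,t}`. -/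
def Zfwd (ξ : (Fin d → ℤ) → ℤ → Ω → ℝ) (β : ℝ) (x : Fin d → ℤ) (s : ℤ) (t : ℤ) (ω : Ω) : ℝ :=
  ∑' y : Fin d → ℤ, Zpp ξ β x s y t ω

/-- `Z_s^{y,t} = ∑_x Z_{x,s}^{y,t}`. -/
def Zbwd (ξ : (Fin d → ℤ) → ℤ → Ω → ℝ) (β : ℝ) (s : ℤ) (y : Fin d → ℤ) (t : ℤ) (ω : Ω) : ℝ :=
  ∑' x : Fin d → ℤ, Zpp ξ β x s y t ω

end DPoly
namespace DPoly

/-- `Φ(θ)`: the characteristic-type function of one step of the simple symmetric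
random walk tilted by `e^φ`. -/
def PhiFn (d : ℕ) (φ : (Fin d → ℝ) →ₗ[ℝ] ℝ) (θ : Fin d → ℝ) : ℂ :=
  (1 / (2 * d) : ℂ) * ∑ j : Fin d,
    (Complex.exp (Complex.I * (θ j : ℂ)) * (Real.exp (φ (Pi.single j 1)) : ℂ) +
      Complex.exp (-(Complex.I * (θ j : ℂ))) * (Real.exp (-φ (Pi.single j 1)) : ℂ))

/-- The cube `𝒞 = (-π/2, 3π/2]^d`. -/
def cube (d : ℕ) : Set (Fin d → ℝ) :=
  Set.univ.pi fun _ => Set.Ioc (-(Real.pi / 2)) (3 * Real.pi / 2)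

/-- `θ⁰ = (0,…,0)` and `θ¹ = (π,…,π)`. -/
def thetaVert (d : ℕ) (j : Fin 2) : Fin d → ℝ := fun _ => (j : ℕ) * Real.pi

end DPoly

set_option maxHeartbeats 1000000
namespace DPoly

open Finset

lemma term_eq (x a : ℝ) :
    Complex.exp (Complex.I * x) * (Real.exp a : ℂ) +
      Complex.exp (-(Complex.I * x)) * (Real.exp (-a) : ℂ) =
    2 * ((Real.cos x * Real.cosh a : ℝ) : ℂ) +
      2 * ((Real.sin x * Real.sinh a : ℝ) : ℂ) * Complex.I := by
  rw [mul_comm Complex.I (x:ℂ), ← neg_mul, Complex.exp_mul_I, Complex.exp_mul_I,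
    Complex.cos_neg, Complex.sin_neg]
  push_cast [Real.cosh_eq, Real.sinh_eq]
  ring

variable {d : ℕ} (φ : (Fin d → ℝ) →ₗ[ℝ] ℝ)

def RR (θ : Fin d → ℝ) : ℝ := ∑ k, Real.cos (θ k) * Real.cosh (φ (Pi.single k 1))
def II (θ : Fin d → ℝ) : ℝ := ∑ k, Real.sin (θ k) * Real.sinh (φ (Pi.single k 1))
def CC : ℝ := ∑ k : Fin d, Real.cosh (φ (Pi.single k 1))

lemma phi_eq (hd : 0 < d) (θ : Fin d → ℝ) :
    PhiFn d φ θ = (d : ℂ)⁻¹ * (((RR φ θ : ℝ) : ℂ) + ((II φ θ : ℝ) : ℂ) * Complex.I) := by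
  have hd' : (d:ℂ) ≠ 0 := Nat.cast_ne_zero.2 hd.ne'
  rw [PhiFn, Finset.sum_congr rfl (fun k _ => term_eq (θ k) (φ (Pi.single k 1))),
    Finset.sum_add_distrib, ← Finset.mul_sum, ← Finset.sum_mul, ← Finset.mul_sum]
  simp only [RR, II, Complex.ofReal_sum]
  field_simp

lemma norm_phi (hd : 0 < d) (θ : Fin d → ℝ) :
    ‖PhiFn d φ θ‖ = Real.sqrt (RR φ θ ^ 2 + II φ θ ^ 2) / d := by
  rw [phi_eq φ hd θ, norm_mul, norm_inv, Complex.norm_natCast,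
    Complex.norm_add_mul_I, inv_mul_eq_div]

lemma cosh_le_two {x : ℝ} (hx : |x| ≤ 1) : Real.cosh x ≤ 2 := by
  have h1 : Real.cosh x ≤ Real.cosh 1 := Real.cosh_le_cosh.2 (by simpa using hx)
  have h2 : Real.exp (-1 : ℝ) * Real.exp (1:ℝ) = 1 := by rw [← Real.exp_add]; norm_num
  have h3 : (0:ℝ) < Real.exp (-1) := Real.exp_pos _
  have h4 := Real.exp_one_gt_d9
  have h5 := Real.exp_one_lt_d9
  have h6 : Real.cosh 1 = (Real.exp 1 + Real.exp (-1)) / 2 := by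
    rw [Real.cosh_eq]
  nlinarith

lemma abs_sinh_le {x : ℝ} (hx : |x| ≤ 1) : |Real.sinh x| ≤ 1.18 := by
  rw [Real.abs_sinh]
  have h1 : Real.sinh |x| ≤ Real.sinh 1 := Real.sinh_le_sinh.2 hx
  have h2 : Real.exp (-1 : ℝ) * Real.exp (1:ℝ) = 1 := by rw [← Real.exp_add]; norm_num
  have h3 : (0:ℝ) < Real.exp (-1) := Real.exp_pos _
  have h5 := Real.exp_one_lt_d9
  have h6 : Real.sinh 1 = (Real.exp 1 - Real.exp (-1)) / 2 := by
    rw [Real.sinh_eq]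
  nlinarith

lemma term_norm_le (x a : ℝ) (ha1 : 1 ≤ Real.cosh a) (ha2 : Real.cosh a ≤ 2) :
    ‖Complex.exp (Complex.I * x) * (Real.exp a : ℂ) +
      Complex.exp (-(Complex.I * x)) * (Real.exp (-a) : ℂ)‖
      ≤ 2 * (Real.cosh a - Real.sin x ^ 2 / 4) := by
  rw [term_eq]
  have h1 : (2:ℂ) * ((Real.cos x * Real.cosh a : ℝ):ℂ) +
      2 * ((Real.sin x * Real.sinh a : ℝ):ℂ) * Complex.I
      = ((2*(Real.cos x * Real.cosh a) : ℝ):ℂ) +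
        ((2*(Real.sin x * Real.sinh a):ℝ):ℂ) * Complex.I := by push_cast; ring
  rw [h1, Complex.norm_add_mul_I]
  have hs := Real.sin_sq_add_cos_sq x
  have hsh := Real.cosh_sq a
  have hs1 := Real.sin_sq_le_one x
  have h2 : (0:ℝ) ≤ 2 * (Real.cosh a - Real.sin x ^2/4) := by nlinarith
  rw [show (2 * (Real.cosh a - Real.sin x ^2/4))
      = Real.sqrt ((2*(Real.cosh a - Real.sin x^2/4))^2) from (Real.sqrt_sq h2).symm]
  apply Real.sqrt_le_sqrt
  nlinarith [sq_nonneg (Real.sin x), sq_nonneg (Real.sin x ^ 2)]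


lemma bound1 (hd : 0 < d) (hf : ∀ k, |φ (Pi.single k 1)| ≤ 1) (θ : Fin d → ℝ) :
    ‖PhiFn d φ θ‖ ≤ (CC φ - (∑ k, Real.sin (θ k) ^ 2) / 4) / d := by
  have hdR : (0:ℝ) < d := by exact_mod_cast hd
  have hnorm : ‖(1 / (2 * (d:ℂ)) : ℂ)‖ = 1/(2*(d:ℝ)) := by
    rw [norm_div, norm_one, norm_mul, Complex.norm_natCast]
    norm_num
  calc ‖PhiFn d φ θ‖
      ≤ (1/(2*(d:ℝ))) * ∑ k, ‖Complex.exp (Complex.I * (θ k : ℂ)) * (Real.exp (φ (Pi.single k 1)) : ℂ) +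
          Complex.exp (-(Complex.I * (θ k : ℂ))) * (Real.exp (-φ (Pi.single k 1)) : ℂ)‖ := by
        rw [PhiFn, norm_mul, hnorm]
        exact mul_le_mul_of_nonneg_left (norm_sum_le _ _) (by positivity)
    _ ≤ (1/(2*(d:ℝ))) * ∑ k, 2 * (Real.cosh (φ (Pi.single k 1)) - Real.sin (θ k) ^ 2 / 4) := by
        apply mul_le_mul_of_nonneg_left _ (by positivity)
        exact Finset.sum_le_sum fun k _ =>
          term_norm_le (θ k) (φ (Pi.single k 1)) (Real.one_le_cosh _) (cosh_le_two (hf k))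
    _ = (CC φ - (∑ k, Real.sin (θ k) ^ 2) / 4) / d := by
        rw [show (∑ k, 2 * (Real.cosh (φ (Pi.single k 1)) - Real.sin (θ k) ^ 2 / 4))
            = 2 * CC φ - (∑ k, Real.sin (θ k) ^ 2) / 2 by
          rw [CC, Finset.mul_sum, Finset.sum_div]
          rw [← Finset.sum_sub_distrib]
          exact Finset.sum_congr rfl fun k _ => by ring]
        field_simp
        ring

lemma CC_ge (hf : ∀ k, |φ (Pi.single k 1)| ≤ 1) : (d:ℝ) ≤ CC φ := by
  rw [CC]
  calc (d:ℝ) = ∑ _k : Fin d, (1:ℝ) := by simp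
    _ ≤ _ := Finset.sum_le_sum fun k _ => Real.one_le_cosh _

lemma CC_le (hf : ∀ k, |φ (Pi.single k 1)| ≤ 1) : CC φ ≤ 2*d := by
  rw [CC]
  calc (∑ k : Fin d, Real.cosh (φ (Pi.single k 1))) ≤ ∑ _k : Fin d, (2:ℝ) :=
      Finset.sum_le_sum fun k _ => cosh_le_two (hf k)
    _ = 2*d := by simp [mul_comm]

lemma bound2 (hd3 : 3 ≤ d) (hf : ∀ k, |φ (Pi.single k 1)| ≤ 1) (θ : Fin d → ℝ)
    (hS : (∑ k, Real.sin (θ k) ^ 2) ≤ 2/5)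
    (k₀ k₁ : Fin d) (h₀ : Real.cos (θ k₀) ≤ 0) (h₁ : 0 ≤ Real.cos (θ k₁)) :
    ‖PhiFn d φ θ‖ ≤ (CC φ - 1/2) / d := by
  have hd0 : 0 < d := by omega
  have hdR : (3:ℝ) ≤ d := by exact_mod_cast hd3
  have hCd := CC_ge φ hf
  have hC2d := CC_le φ hf
  rw [norm_phi φ hd0 θ]
  have hnum : Real.sqrt (RR φ θ ^ 2 + II φ θ ^ 2) ≤ CC φ - 1/2 := by
    -- |RR| ≤ CC - 1
    have h4 : ∀ k ∈ Finset.univ, (0:ℝ) ≤ (1 - Real.cos (θ k)) * Real.cosh (φ (Pi.single k 1)) :=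
      fun k _ => mul_nonneg (by nlinarith [Real.cos_le_one (θ k)]) (Real.cosh_pos _).le
    have h4' : ∀ k ∈ Finset.univ, (0:ℝ) ≤ (1 + Real.cos (θ k)) * Real.cosh (φ (Pi.single k 1)) :=
      fun k _ => mul_nonneg (by nlinarith [Real.neg_one_le_cos (θ k)]) (Real.cosh_pos _).le
    have h6 : ∑ k, (1 - Real.cos (θ k)) * Real.cosh (φ (Pi.single k 1)) = CC φ - RR φ θ := by
      rw [CC, RR, ← Finset.sum_sub_distrib]
      exact Finset.sum_congr rfl fun k _ => by ring
    have h6' : ∑ k, (1 + Real.cos (θ k)) * Real.cosh (φ (Pi.single k 1)) = CC φ + RR φ θ := by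
      rw [CC, RR, ← Finset.sum_add_distrib]
      exact Finset.sum_congr rfl fun k _ => by ring
    have h5 := Finset.single_le_sum h4 (Finset.mem_univ k₀)
    have h5' := Finset.single_le_sum h4' (Finset.mem_univ k₁)
    rw [h6] at h5; rw [h6'] at h5'
    have hch0 : 1 ≤ Real.cosh (φ (Pi.single k₀ 1)) := Real.one_le_cosh _
    have hch1 : 1 ≤ Real.cosh (φ (Pi.single k₁ 1)) := Real.one_le_cosh _
    have hR1 : RR φ θ ≤ CC φ - 1 := by nlinarith
    have hR2 : -(CC φ - 1) ≤ RR φ θ := by nlinarith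
    have hRsq : RR φ θ ^ 2 ≤ (CC φ - 1)^2 := sq_le_sq' hR2 hR1
    -- |II| bound
    have hI1 : |II φ θ| ≤ ∑ k, 1.18 * |Real.sin (θ k)| := by
      refine (Finset.abs_sum_le_sum_abs _ _).trans (Finset.sum_le_sum fun k _ => ?_)
      rw [abs_mul, mul_comm]
      exact mul_le_mul_of_nonneg_right (abs_sinh_le (hf k)) (abs_nonneg _)
    have hI2 : (∑ k, |Real.sin (θ k)|)^2 ≤ (d:ℝ) * ∑ k, Real.sin (θ k)^2 := by
      have := sq_sum_le_card_mul_sum_sq (s := Finset.univ) (f := fun k : Fin d => |Real.sin (θ k)|)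
      simpa [sq_abs] using this
    have hIabs : 0 ≤ ∑ k, |Real.sin (θ k)| := Finset.sum_nonneg fun k _ => abs_nonneg _
    have hI3 : II φ θ ^ 2 ≤ 1.3924 * ((d:ℝ) * ∑ k, Real.sin (θ k)^2) := by
      have h7 : |II φ θ| ≤ 1.18 * ∑ k, |Real.sin (θ k)| := by
        rw [Finset.mul_sum] at *; exact hI1
      nlinarith [abs_nonneg (II φ θ), sq_abs (II φ θ)]
    have hSnn : (0:ℝ) ≤ ∑ k, Real.sin (θ k)^2 := Finset.sum_nonneg fun k _ => sq_nonneg _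
    have hfin : RR φ θ ^ 2 + II φ θ ^ 2 ≤ (CC φ - 1/2)^2 := by nlinarith
    rw [show CC φ - 1/2 = Real.sqrt ((CC φ - 1/2)^2) from (Real.sqrt_sq (by nlinarith)).symm]
    exact Real.sqrt_le_sqrt hfin
  have hdRpos : (0:ℝ) < d := by exact_mod_cast hd0
  gcongr


lemma CC_pos (hd : 0 < d) : (0:ℝ) < CC φ := by
  rw [CC]
  have : (0:ℝ) < ∑ _k : Fin d, (1:ℝ) := by simp [hd]
  calc (0:ℝ) < ∑ _k : Fin d, (1:ℝ) := this
    _ ≤ _ := Finset.sum_le_sum fun k _ => Real.one_le_cosh _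

lemma norm_phi_vert (hd : 0 < d) (j : Fin 2) : ‖PhiFn d φ (thetaVert d j)‖ = CC φ / d := by
  have hC0 : (0:ℝ) ≤ CC φ := (CC_pos φ hd).le
  have h0 : II φ (thetaVert d j) = 0 := by
    fin_cases j <;> simp [II, thetaVert]
  have h1 : RR φ (thetaVert d j) ^ 2 = CC φ ^ 2 := by
    fin_cases j <;>
      simp [RR, thetaVert, CC, neg_mul, Finset.sum_neg_distrib, neg_sq]
  rw [norm_phi φ hd, h0, h1]
  norm_num
  rw [Real.sqrt_sq hC0]

lemma jordan {x : ℝ} (hx : |x| ≤ Real.pi/2) : (2/Real.pi)^2 * x^2 ≤ Real.sin x ^ 2 := by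
  have h := Real.mul_abs_le_abs_sin hx
  have h2 : (0:ℝ) ≤ 2/Real.pi * |x| := by positivity
  calc (2/Real.pi)^2 * x^2 = (2/Real.pi*|x|)^2 := by rw [mul_pow, sq_abs]
    _ ≤ |Real.sin x|^2 := by nlinarith [abs_nonneg (Real.sin x)]
    _ = Real.sin x ^2 := sq_abs _

lemma two_fifth_lt : (2/5:ℝ) < (2/Real.pi)^2 := by
  have hπ : Real.pi < 3.15 := Real.pi_lt_d2
  have hπ0 := Real.pi_pos
  rw [div_pow, lt_div_iff₀ (by positivity)]
  nlinarith

lemma key_step {d C x A δ v : ℝ} (hd : 0 < d) (hC : 0 < C) (hv : v ≤ (C - x)/d)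
    (h2 : δ * A ≤ x / C) : v ≤ Real.exp (-(δ * A)) * (C/d) := by
  have h3 : 1 - x/C ≤ Real.exp (-(δ*A)) := by
    have h4 := Real.add_one_le_exp (-(x/C))
    have h5 : Real.exp (-(x/C)) ≤ Real.exp (-(δ*A)) := Real.exp_le_exp.2 (by linarith)
    linarith
  have h6 : (C - x)/d = (1 - x/C) * (C/d) := by field_simp
  rw [h6] at hv
  calc v ≤ (1 - x/C)*(C/d) := hv
    _ ≤ Real.exp (-(δ*A)) * (C/d) := mul_le_mul_of_nonneg_right h3 (by positivity)


lemma main_aux (hd3 : 3 ≤ d) (hf : ∀ k, |φ (Pi.single k 1)| ≤ 1)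
    (θ : Fin d → ℝ) (hθ : ∀ k, -(Real.pi/2) < θ k ∧ θ k ≤ 3*Real.pi/2)
    (c : ℝ) (hc : c = 0 ∨ c = Real.pi)
    (hb : 1 ≤ ∑ k, (θ k - (Real.pi - c))^2) :
    ‖PhiFn d φ θ‖ ≤
      Real.exp (-((1:ℝ)/(2000*(d:ℝ)^2) * ∑ k, (θ k - c)^2)) * (CC φ / d) := by
  have hπ0 := Real.pi_pos
  have hπ315 : Real.pi < 3.15 := Real.pi_lt_d2
  have hπ3 : 3 < Real.pi := Real.pi_gt_three
  have hd0 : 0 < d := by omega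
  have hdR : (3:ℝ) ≤ d := by exact_mod_cast hd3
  have hdR0 : (0:ℝ) < d := by linarith
  have hCd := CC_ge φ hf
  have hC2d := CC_le φ hf
  have hC0 : (0:ℝ) < CC φ := CC_pos φ hd0
  set S := ∑ k, Real.sin (θ k)^2 with hSdef
  set A := ∑ k, (θ k - c)^2 with hAdef
  have hS0 : (0:ℝ) ≤ S := Finset.sum_nonneg fun k _ => sq_nonneg _
  have hA0 : (0:ℝ) ≤ A := Finset.sum_nonneg fun k _ => sq_nonneg _
  have hA23 : A ≤ 23*d := by
    rw [hAdef]
    calc (∑ k, (θ k - c)^2) ≤ ∑ _k : Fin d, (23:ℝ) := by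
          refine Finset.sum_le_sum fun k _ => ?_
          rcases hc with rfl | rfl
          · nlinarith [(hθ k).1, (hθ k).2]
          · nlinarith [(hθ k).1, (hθ k).2]
      _ = 23*d := by simp [mul_comm]
  by_cases hS : 2/5 ≤ S
  · -- large S : direct bound
    refine key_step hdR0 hC0 (bound1 φ hd0 hf θ) ?_
    rw [le_div_iff₀ hC0]
    have h1 : (1:ℝ)/(2000*(d:ℝ)^2) * A * CC φ ≤ (1:ℝ)/(2000*(d:ℝ)^2) * (23*d) * (2*d) := by
      gcongr
      all_goals positivity
    have h2 : (1:ℝ)/(2000*(d:ℝ)^2) * (23*d) * (2*d) = 46/2000 := by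
      field_simp
      ring
    rw [h2] at h1
    linarith
  · push_neg at hS
    have h45 := two_fifth_lt
    by_cases hall : ∀ k, 0 < Real.cos (θ k)
    · -- all coordinates near 0
      have hsmall : ∀ k, |θ k| ≤ Real.pi/2 := by
        intro k
        rcases le_or_gt (Real.pi/2) (θ k) with h | h
        · exact absurd (Real.cos_nonpos_of_pi_div_two_le_of_le h
            (by nlinarith [(hθ k).2])) (not_le.2 (hall k))
        · rw [abs_le]; constructor <;> nlinarith [(hθ k).1]
      have hJ : (2/Real.pi)^2 * (∑ k, (θ k - 0)^2) ≤ S := by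
        rw [Finset.mul_sum]
        refine Finset.sum_le_sum fun k _ => ?_
        simpa using jordan (hsmall k)
      rcases hc with rfl | rfl
      · -- target vertex is 0 : S ≥ (2/5) A
        have hSA : 2/5 * A ≤ S := by
          have : (2/5:ℝ) * A ≤ (2/Real.pi)^2 * A := by nlinarith
          simp only [hAdef, sub_zero] at *
          calc (2/5:ℝ) * (∑ k, (θ k)^2) ≤ (2/Real.pi)^2 * (∑ k, (θ k)^2) := this
            _ ≤ S := by simpa using hJ
        refine key_step hdR0 hC0 (bound1 φ hd0 hf θ) ?_
        rw [le_div_iff₀ hC0]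
        have h1 : (1:ℝ)/(2000*(d:ℝ)^2) * A * CC φ ≤ (1:ℝ)/(2000*(d:ℝ)^2) * A * (2*d) := by
          gcongr
          all_goals positivity
        have h2 : (1:ℝ)/(2000*(d:ℝ)^2) * A * (2*d) = A/(1000*d) := by
          field_simp; ring
        have h3 : A/(1000*d) ≤ (2/5*A)/4 := by
          rw [div_le_div_iff₀ (by positivity) (by norm_num)]
          nlinarith
        calc (1:ℝ)/(2000*(d:ℝ)^2) * A * CC φ ≤ A/(1000*d) := by rw [← h2]; exact h1
          _ ≤ (2/5*A)/4 := h3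
          _ ≤ S/4 := by linarith
      · -- target vertex is π but θ is near 0 : contradiction with hb
        exfalso
        have hb' : (1:ℝ) ≤ ∑ k, (θ k - 0)^2 := by simpa using hb
        have : (2/Real.pi)^2 ≤ S := by
          calc (2/Real.pi)^2 = (2/Real.pi)^2 * 1 := by ring
            _ ≤ (2/Real.pi)^2 * ∑ k, (θ k - 0)^2 := by
                apply mul_le_mul_of_nonneg_left hb' (by positivity)
            _ ≤ S := hJ
        linarith
    · by_cases hall2 : ∀ k, Real.cos (θ k) < 0
      · -- all coordinates near π
        have hsmall : ∀ k, |θ k - Real.pi| ≤ Real.pi/2 := by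
          intro k
          rcases le_or_gt (θ k) (Real.pi/2) with h | h
          · exact absurd (Real.cos_nonneg_of_mem_Icc ⟨(hθ k).1.le, h⟩)
              (not_le.2 (hall2 k))
          · rw [abs_le]; constructor <;> nlinarith [(hθ k).2]
        have hJ : (2/Real.pi)^2 * (∑ k, (θ k - Real.pi)^2) ≤ S := by
          rw [Finset.mul_sum]
          refine Finset.sum_le_sum fun k _ => ?_
          have := jordan (hsmall k)
          rwa [Real.sin_sub_pi, neg_sq] at this
        rcases hc with rfl | rfl
        · -- target vertex 0 but θ near π : contradiction
          exfalso
          have hb' : (1:ℝ) ≤ ∑ k, (θ k - Real.pi)^2 := by simpa using hb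
          have : (2/Real.pi)^2 ≤ S := by
            calc (2/Real.pi)^2 = (2/Real.pi)^2 * 1 := by ring
              _ ≤ (2/Real.pi)^2 * ∑ k, (θ k - Real.pi)^2 := by
                  apply mul_le_mul_of_nonneg_left hb' (by positivity)
              _ ≤ S := hJ
          linarith
        · have hSA : 2/5 * A ≤ S := by
            have h0 : (2/5:ℝ) * A ≤ (2/Real.pi)^2 * A := by nlinarith
            calc (2/5:ℝ) * A ≤ (2/Real.pi)^2 * A := h0
              _ ≤ S := hJ
          refine key_step hdR0 hC0 (bound1 φ hd0 hf θ) ?_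
          rw [le_div_iff₀ hC0]
          have h1 : (1:ℝ)/(2000*(d:ℝ)^2) * A * CC φ ≤ (1:ℝ)/(2000*(d:ℝ)^2) * A * (2*d) := by
            gcongr
            all_goals positivity
          have h2 : (1:ℝ)/(2000*(d:ℝ)^2) * A * (2*d) = A/(1000*d) := by
            field_simp; ring
          have h3 : A/(1000*d) ≤ (2/5*A)/4 := by
            rw [div_le_div_iff₀ (by positivity) (by norm_num)]
            nlinarith
          calc (1:ℝ)/(2000*(d:ℝ)^2) * A * CC φ ≤ A/(1000*d) := by rw [← h2]; exact h1
            _ ≤ (2/5*A)/4 := h3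
            _ ≤ S/4 := by linarith
      · -- mixed case
        push_neg at hall hall2
        obtain ⟨k₀, hk₀⟩ := hall
        obtain ⟨k₁, hk₁⟩ := hall2
        refine key_step hdR0 hC0 (bound2 φ hd3 hf θ hS.le k₀ k₁ hk₀ hk₁) ?_
        rw [le_div_iff₀ hC0]
        have h1 : (1:ℝ)/(2000*(d:ℝ)^2) * A * CC φ ≤ (1:ℝ)/(2000*(d:ℝ)^2) * (23*d) * (2*d) := by
          gcongr
          all_goals positivity
        have h2 : (1:ℝ)/(2000*(d:ℝ)^2) * (23*d) * (2*d) = 46/2000 := by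
          field_simp
          ring
        rw [h2] at h1
        linarith


lemma enormR_single {d : ℕ} (k : Fin d) : enormR (Pi.single k (1:ℝ)) = 1 := by
  unfold enormR
  rw [Finset.sum_eq_single k]
  · simp
  · intro i _ hik; simp [Pi.single_eq_of_ne hik]
  · simp

end DPoly


open DPoly in
/-- Gaussian-type bound on the tilted characteristic function away from the
two maximizers `θ⁰ = (0,…,0)` and `θ¹ = (π,…,π)` (Claim A.2). -/
theorem statement18 (d : ℕ) (hd : 3 ≤ d) (φ : (Fin d → ℝ) →ₗ[ℝ] ℝ)
    (hφ : ∀ x : Fin d → ℝ, |φ x| ≤ enormR x) :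
    ∃ ε > (0 : ℝ), ∃ δ > (0 : ℝ), ∀ j : Fin 2, ∀ θ : Fin d → ℝ, θ ∈ cube d →
      ε ≤ enormR (θ - thetaVert d (1 - j)) →
      ‖PhiFn d φ θ / PhiFn d φ (thetaVert d j)‖ ≤
        Real.exp (-δ * enormR (θ - thetaVert d j) ^ 2) := by
  have hd0 : 0 < d := by omega
  have hf : ∀ k, |φ (Pi.single k 1)| ≤ 1 := fun k => by
    have h := hφ (Pi.single k 1)
    rwa [enormR_single] at h
  refine ⟨1, one_pos, 1/(2000*(d:ℝ)^2), by positivity, ?_⟩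
  intro j θ hθ hε
  have hcube : ∀ k, -(Real.pi/2) < θ k ∧ θ k ≤ 3*Real.pi/2 := by
    intro k
    have h := Set.mem_univ_pi.1 hθ k
    exact ⟨h.1, h.2⟩
  have hA : ∀ j' : Fin 2, enormR (θ - thetaVert d j') ^ 2
      = ∑ k, (θ k - ((j':ℕ):ℝ)*Real.pi)^2 := by
    intro j'
    rw [enormR, Real.sq_sqrt (Finset.sum_nonneg fun k _ => sq_nonneg _)]
    exact Finset.sum_congr rfl fun k _ => by simp [thetaVert]
  have hsq : ∀ j' : Fin 2, 1 ≤ enormR (θ - thetaVert d j') →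
      1 ≤ ∑ k, (θ k - ((j':ℕ):ℝ)*Real.pi)^2 := by
    intro j' h
    rw [← hA j']
    nlinarith
  rw [norm_div, norm_phi_vert φ hd0 j, div_le_iff₀ (div_pos (CC_pos φ hd0) (by exact_mod_cast hd0)), neg_mul, hA j]
  fin_cases j
  · have hb := hsq 1 (by simpa using hε)
    have hgoal := main_aux φ hd hf θ hcube 0 (Or.inl rfl) (by simpa using hb)
    simpa using hgoal
  · have hb := hsq 0 (by simpa using hε)
    have hgoal := main_aux φ hd hf θ hcube Real.pi (Or.inr rfl) (by simpa using hb)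
    simpa using hgoal
end
end

section
/- Let d ≥ 3. There is a constant c > 0 such that for every t ∈ ℕ, every l ∈ ℕ₀, and every M > 0, the sum of Π_{j=1}^{l+1} t_j^{−d/2} over all positive integers t₁, …, t_{l+1} satisfying t₁ + ⋯ + t_{l+1} = t and t_j ≥ M for every j is at most (c^l / M^{l(d/2 − 1)}) t^{−d/2}. -/
open MeasureTheory ProbabilityTheory Filter Topology

noncomputable section

lemma aux_ptwise19 (n : ℕ) (hn : 2 ≤ n) :
    (n : ℝ) ^ (-(3/2) : ℝ) ≤ 2 / Real.sqrt ((n:ℝ) - 1) - 2 / Real.sqrt n := by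
  have hn1 : (1:ℝ) ≤ (n:ℝ) - 1 := by
    have : (2:ℝ) ≤ n := by exact_mod_cast hn
    linarith
  set x := Real.sqrt ((n:ℝ) - 1) with hxdef
  set y := Real.sqrt (n:ℝ) with hydef
  have hx1 : 1 ≤ x := by
    exact Real.one_le_sqrt.mpr hn1
  have hx2 : x ^ 2 = (n:ℝ) - 1 := Real.sq_sqrt (by linarith)
  have hy2 : y ^ 2 = (n:ℝ) := Real.sq_sqrt (by positivity)
  have hxy : x ≤ y := Real.sqrt_le_sqrt (by linarith)
  have hy0 : 0 < y := by linarith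
  have hx0 : 0 < x := by linarith
  have hrw : (n : ℝ) ^ (-(3/2) : ℝ) = 1 / (y ^ 2 * y) := by
    rw [Real.rpow_neg (by positivity)]
    rw [show (3/2 : ℝ) = 1 + 1/2 by norm_num, Real.rpow_add (by positivity : (0:ℝ) < n),
      Real.rpow_one, ← Real.sqrt_eq_rpow, ← hydef, hy2.symm]
    ring_nf
  rw [hrw]
  rw [div_sub_div _ _ (ne_of_gt hx0) (ne_of_gt hy0), div_le_div_iff₀ (by positivity) (by positivity)]
  nlinarith [sq_nonneg (x - y), sq_nonneg (x*y)]

lemma aux_telescope19 (a : ℕ) (ha : 2 ≤ a) (N : ℕ) :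
    ∑ n ∈ Finset.Icc a N, (n : ℝ) ^ (-(3/2) : ℝ) ≤ 2 / Real.sqrt ((a:ℝ) - 1) := by
  have key : ∀ N, ∑ n ∈ Finset.Icc a N, (n : ℝ) ^ (-(3/2) : ℝ)
      ≤ 2 / Real.sqrt ((a:ℝ) - 1) - if a ≤ N then 2 / Real.sqrt (N:ℝ) else 0 := by
    intro N
    induction N with
    | zero =>
      rw [Finset.Icc_eq_empty (by omega), Finset.sum_empty, if_neg (by omega), sub_zero]
      positivity
    | succ m ih =>
      rcases Nat.lt_or_ge (m+1) a with hma | hma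
      · rw [Finset.Icc_eq_empty (by omega), Finset.sum_empty, if_neg (by omega), sub_zero]
        positivity
      · rw [Finset.sum_Icc_succ_top hma, if_pos hma]
        have hstep := aux_ptwise19 (m+1) (by omega)
        rcases Nat.lt_or_ge m a with hm2 | hm2
        · -- m + 1 = a, sum over Icc a m is empty
          have hma' : m + 1 = a := by omega
          rw [Finset.Icc_eq_empty (by omega : ¬ a ≤ m), Finset.sum_empty]
          have : ((m:ℝ)+1) - 1 = (a:ℝ) - 1 := by
            have : ((m:ℝ)+1) = (a:ℝ) := by exact_mod_cast congrArg (Nat.cast (R := ℝ)) hma'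
            linarith
          push_cast at hstep ⊢
          rw [this] at hstep
          have hma'' : ((m:ℝ)+1) = (a:ℝ) := by exact_mod_cast congrArg (Nat.cast (R := ℝ)) hma'
          rw [hma''] at hstep ⊢
          linarith
        · rw [if_pos hm2] at ih
          have hsq : ((m:ℝ)+1) - 1 = (m:ℝ) := by ring
          push_cast at hstep ⊢
          rw [hsq] at hstep
          linarith
  have h2 := key N
  rcases le_or_gt a N with h | h
  · rw [if_pos h] at h2
    have : 0 ≤ 2 / Real.sqrt (N:ℝ) := by positivity
    linarith
  · rw [if_neg (by omega)] at h2
    linarith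

lemma aux_tail3219 (s : Finset ℕ) (M : ℝ) (hM : 0 < M) (hs : ∀ n ∈ s, 1 ≤ n ∧ M ≤ (n:ℝ)) :
    ∑ n ∈ s, (n:ℝ) ^ (-(3/2):ℝ) ≤ 5 * M ^ (-(1/2) : ℝ) := by
  set m₀ := max 1 ⌈M⌉₊ with hm₀
  set N := s.sup id with hN
  have hsub : s ⊆ Finset.Icc m₀ N := by
    intro n hn
    obtain ⟨h1, h2⟩ := hs n hn
    rw [Finset.mem_Icc]
    exact ⟨sup_le h1 (Nat.ceil_le.mpr h2), Finset.le_sup (f := id) hn⟩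
  have hle : ∑ n ∈ s, (n:ℝ) ^ (-(3/2):ℝ) ≤ ∑ n ∈ Finset.Icc m₀ N, (n:ℝ) ^ (-(3/2):ℝ) :=
    Finset.sum_le_sum_of_subset_of_nonneg hsub (fun n _ _ => Real.rpow_nonneg (by positivity) _)
  rcases le_or_gt ⌈M⌉₊ 1 with hc | hc
  · -- M ≤ 1
    have hM1 : M ≤ 1 := by
      by_contra hM1
      push_neg at hM1
      have : 1 < ⌈M⌉₊ := by
        have := Nat.lt_ceil.mpr (by exact_mod_cast hM1 : ((1:ℕ):ℝ) < M)
        omega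
      omega
    have hm1 : m₀ = 1 := by omega
    have h3 : ∑ n ∈ Finset.Icc m₀ N, (n:ℝ) ^ (-(3/2):ℝ) ≤ 3 := by
      rw [hm1]
      rcases Nat.eq_zero_or_pos N with h0 | h0
      · rw [h0, Finset.Icc_eq_empty (by omega), Finset.sum_empty]; norm_num
      · have : Finset.Icc 1 N = insert 1 (Finset.Icc 2 N) := by
          ext n; simp [Finset.mem_Icc, Finset.mem_insert]; omega
        rw [this, Finset.sum_insert (by simp [Finset.mem_Icc])]
        have ht := aux_telescope19 2 le_rfl N
        norm_num at ht ⊢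
        linarith
    have hMr : (1:ℝ) ≤ M ^ (-(1/2) : ℝ) := by
      have := Real.rpow_le_rpow_of_nonpos hM hM1 (by norm_num : (-(1/2):ℝ) ≤ 0)
      rwa [Real.one_rpow] at this
    linarith
  · -- M > 1, m₀ = ⌈M⌉₊ ≥ 2
    have hm2 : m₀ = ⌈M⌉₊ := by omega
    have hm2' : 2 ≤ m₀ := by omega
    have ht := aux_telescope19 m₀ hm2' N
    have hM1 : 1 < M := by
      have := Nat.lt_ceil.mp hc
      exact_mod_cast this
    have hgoal : 2 / Real.sqrt ((m₀:ℝ) - 1) ≤ 5 * M ^ (-(1/2) : ℝ) := by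
      have hMm : M ≤ (m₀:ℝ) := by rw [hm2]; exact Nat.le_ceil M
      have hm1R : (1:ℝ) ≤ (m₀:ℝ) - 1 := by
        have : (2:ℝ) ≤ (m₀:ℝ) := by exact_mod_cast hm2'
        linarith
      have hrw : M ^ (-(1/2) : ℝ) = 1 / Real.sqrt M := by
        rw [Real.rpow_neg hM.le, Real.sqrt_eq_rpow]
        norm_num
      rw [hrw]
      set u := Real.sqrt M with hu
      set v := Real.sqrt ((m₀:ℝ) - 1) with hv
      have hu2 : u ^ 2 = M := Real.sq_sqrt hM.le
      have hv2 : v ^ 2 = (m₀:ℝ) - 1 := Real.sq_sqrt (by linarith)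
      have hu0 : 0 < u := Real.sqrt_pos.mpr hM
      have hv0 : 0 < v := Real.sqrt_pos.mpr (by linarith)
      rw [mul_one_div, div_le_div_iff₀ hv0 hu0]
      -- 2 * u ≤ 5 * v, given u² = M ≤ m₀, v² = m₀-1 ≥ max(1, M-1)
      nlinarith [sq_nonneg (2*u - 5*v), sq_nonneg (2*u + 5*v), mul_pos hu0 hv0]
    linarith

lemma aux_tailp19 (p : ℝ) (hp : 3/2 ≤ p) (s : Finset ℕ) (M : ℝ) (hM : 0 < M)
    (hs : ∀ n ∈ s, 1 ≤ n ∧ M ≤ (n:ℝ)) :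
    ∑ n ∈ s, (n:ℝ) ^ (-p) ≤ 5 * M ^ ((1:ℝ) - p) := by
  have h1 : ∑ n ∈ s, (n:ℝ) ^ (-p) ≤ ∑ n ∈ s, (n:ℝ) ^ (-(3/2):ℝ) * M ^ ((3:ℝ)/2 - p) := by
    apply Finset.sum_le_sum
    intro n hn
    obtain ⟨hn1, hnM⟩ := hs n hn
    have hn0 : (0:ℝ) < n := by exact_mod_cast hn1
    have : (n:ℝ) ^ (-p) = (n:ℝ) ^ (-(3/2):ℝ) * (n:ℝ) ^ ((3:ℝ)/2 - p) := by
      rw [← Real.rpow_add hn0]; ring_nf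
    rw [this]
    exact mul_le_mul_of_nonneg_left
      (Real.rpow_le_rpow_of_nonpos hM hnM (by linarith)) (Real.rpow_nonneg hn0.le _)
  rw [← Finset.sum_mul] at h1
  have h2 := aux_tail3219 s M hM hs
  have h3 : (0:ℝ) ≤ M ^ ((3:ℝ)/2 - p) := Real.rpow_nonneg hM.le _
  calc ∑ n ∈ s, (n:ℝ) ^ (-p) ≤ (∑ n ∈ s, (n:ℝ) ^ (-(3/2):ℝ)) * M ^ ((3:ℝ)/2 - p) := h1
    _ ≤ 5 * M ^ (-(1/2):ℝ) * M ^ ((3:ℝ)/2 - p) := by gcongr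
    _ = 5 * M ^ ((1:ℝ) - p) := by
        rw [mul_assoc, ← Real.rpow_add hM]; ring_nf

lemma aux_half_bound19 (p : ℝ) (hp : 3/2 ≤ p) (t : ℕ) (ht : 1 ≤ t) (x : ℝ)
    (hx : (t:ℝ)/2 ≤ x) : x ^ (-p) ≤ 2 ^ p * (t:ℝ) ^ (-p) := by
  have ht0 : (0:ℝ) < t := by exact_mod_cast ht
  have h1 : x ^ (-p) ≤ ((t:ℝ)/2) ^ (-p) :=
    Real.rpow_le_rpow_of_nonpos (by positivity) hx (by linarith)
  have h2 : ((t:ℝ)/2) ^ (-p) = 2 ^ p * (t:ℝ) ^ (-p) := by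
    rw [Real.div_rpow ht0.le (by norm_num), Real.rpow_neg (by norm_num : (0:ℝ) ≤ 2),
      div_eq_mul_inv, inv_inv, mul_comm]
  linarith
lemma aux_conv19 (p : ℝ) (hp : 3/2 ≤ p) (t : ℕ) (ht : 1 ≤ t) (M : ℝ) (hM : 0 < M) :
    ∑ u ∈ (Finset.range (t+1)).filter
        (fun u : ℕ => 1 ≤ u ∧ M ≤ (u:ℝ) ∧ M ≤ ((t - u : ℕ):ℝ) ∧ u + 1 ≤ t),
      (u:ℝ) ^ (-p) * ((t - u : ℕ):ℝ) ^ (-p)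
    ≤ 10 * 2 ^ p * M ^ ((1:ℝ) - p) * (t:ℝ) ^ (-p) := by
  have ht0 : (0:ℝ) < t := by exact_mod_cast ht
  set U := (Finset.range (t+1)).filter
      (fun u : ℕ => 1 ≤ u ∧ M ≤ (u:ℝ) ∧ M ≤ ((t - u : ℕ):ℝ) ∧ u + 1 ≤ t) with hU
  have hUmem : ∀ u ∈ U, 1 ≤ u ∧ M ≤ (u:ℝ) ∧ M ≤ ((t - u : ℕ):ℝ) ∧ u + 1 ≤ t := by
    intro u hu; exact (Finset.mem_filter.mp hu).2
  rw [← Finset.sum_filter_add_sum_filter_not U (fun u => 2*u ≤ t)]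
  have part1 : ∑ u ∈ U.filter (fun u => 2*u ≤ t), (u:ℝ) ^ (-p) * ((t - u : ℕ):ℝ) ^ (-p)
      ≤ 5 * M ^ ((1:ℝ) - p) * (2 ^ p * (t:ℝ) ^ (-p)) := by
    calc ∑ u ∈ U.filter (fun u => 2*u ≤ t), (u:ℝ) ^ (-p) * ((t - u : ℕ):ℝ) ^ (-p)
        ≤ ∑ u ∈ U.filter (fun u => 2*u ≤ t), (u:ℝ) ^ (-p) * (2 ^ p * (t:ℝ) ^ (-p)) := by
          apply Finset.sum_le_sum
          intro u hu
          have h2u := (Finset.mem_filter.mp hu).2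
          obtain ⟨h1, h2, h3, h4⟩ := hUmem u (Finset.mem_filter.mp hu).1
          have hcast : ((t - u : ℕ):ℝ) = (t:ℝ) - u := by
            push_cast [Nat.cast_sub (by omega : u ≤ t)]; ring
          have : (t:ℝ)/2 ≤ ((t - u : ℕ):ℝ) := by
            rw [hcast]
            have : (2*u : ℝ) ≤ t := by exact_mod_cast h2u
            linarith
          exact mul_le_mul_of_nonneg_left (aux_half_bound19 p hp t ht _ this)
            (Real.rpow_nonneg (by positivity) _)
      _ = (∑ u ∈ U.filter (fun u => 2*u ≤ t), (u:ℝ) ^ (-p)) * (2 ^ p * (t:ℝ) ^ (-p)) := by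
          rw [Finset.sum_mul]
      _ ≤ 5 * M ^ ((1:ℝ) - p) * (2 ^ p * (t:ℝ) ^ (-p)) := by
          apply mul_le_mul_of_nonneg_right _ (by positivity)
          apply aux_tailp19 p hp _ M hM
          intro n hn
          obtain ⟨h1, h2, _, _⟩ := hUmem n (Finset.mem_filter.mp hn).1
          exact ⟨h1, h2⟩
  have part2 : ∑ u ∈ U.filter (fun u => ¬ 2*u ≤ t), (u:ℝ) ^ (-p) * ((t - u : ℕ):ℝ) ^ (-p)
      ≤ 2 ^ p * (t:ℝ) ^ (-p) * (5 * M ^ ((1:ℝ) - p)) := by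
    calc ∑ u ∈ U.filter (fun u => ¬ 2*u ≤ t), (u:ℝ) ^ (-p) * ((t - u : ℕ):ℝ) ^ (-p)
        ≤ ∑ u ∈ U.filter (fun u => ¬ 2*u ≤ t), 2 ^ p * (t:ℝ) ^ (-p) * ((t - u : ℕ):ℝ) ^ (-p) := by
          apply Finset.sum_le_sum
          intro u hu
          have h2u := (Finset.mem_filter.mp hu).2
          obtain ⟨h1, h2, h3, h4⟩ := hUmem u (Finset.mem_filter.mp hu).1
          have : (t:ℝ)/2 ≤ (u:ℝ) := by
            have : (t:ℝ) < 2*u := by exact_mod_cast by omega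
            linarith
          exact mul_le_mul_of_nonneg_right (aux_half_bound19 p hp t ht _ this)
            (Real.rpow_nonneg (by positivity) _)
      _ = 2 ^ p * (t:ℝ) ^ (-p) * ∑ u ∈ U.filter (fun u => ¬ 2*u ≤ t), ((t - u : ℕ):ℝ) ^ (-p) := by
          rw [Finset.mul_sum]
      _ ≤ 2 ^ p * (t:ℝ) ^ (-p) * (5 * M ^ ((1:ℝ) - p)) := by
          apply mul_le_mul_of_nonneg_left _ (by positivity)
          rw [show ∑ u ∈ U.filter (fun u => ¬ 2*u ≤ t), ((t - u : ℕ):ℝ) ^ (-p)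
              = ∑ n ∈ (U.filter (fun u => ¬ 2*u ≤ t)).image (fun u => t - u), (n:ℝ) ^ (-p) by
            rw [Finset.sum_image]
            intro x hx y hy hxy
            have hx' : x < t + 1 := Finset.mem_range.mp (Finset.mem_filter.mp
              (Finset.mem_filter.mp hx).1).1
            have hy' : y < t + 1 := Finset.mem_range.mp (Finset.mem_filter.mp
              (Finset.mem_filter.mp hy).1).1
            simp only at hxy
            omega]
          apply aux_tailp19 p hp _ M hM
          intro n hn
          obtain ⟨u, hu, rfl⟩ := Finset.mem_image.mp hn
          obtain ⟨h1, h2, h3, h4⟩ := hUmem u (Finset.mem_filter.mp hu).1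
          exact ⟨by omega, h3⟩
  calc _ ≤ 5 * M ^ ((1:ℝ) - p) * (2 ^ p * (t:ℝ) ^ (-p))
        + 2 ^ p * (t:ℝ) ^ (-p) * (5 * M ^ ((1:ℝ) - p)) := add_le_add part1 part2
    _ = 10 * 2 ^ p * M ^ ((1:ℝ) - p) * (t:ℝ) ^ (-p) := by ring

set_option maxHeartbeats 2000000 in
lemma aux_main_claim19 (p : ℝ) (hp : 3/2 ≤ p) :
    ∀ l : ℕ, ∀ t : ℕ, 1 ≤ t → ∀ M : ℝ, 0 < M →
    ∑ f ∈ (Fintype.piFinset fun _ : Fin (l + 1) => Finset.range (t + 1)).filter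
        (fun f => (∀ j, 1 ≤ f j) ∧ (∑ j, f j) = t ∧ ∀ j, M ≤ (f j : ℝ)),
      ∏ j, (f j : ℝ) ^ (-p)
    ≤ (10 * 2 ^ p) ^ l * M ^ ((l:ℝ) * (1 - p)) * (t:ℝ) ^ (-p) := by
  intro l
  induction l with
  | zero =>
    intro t ht M hM
    have ht0 : (0:ℝ) < t := by exact_mod_cast ht
    have hsub : (Fintype.piFinset fun _ : Fin 1 => Finset.range (t + 1)).filter
        (fun f => (∀ j, 1 ≤ f j) ∧ (∑ j, f j) = t ∧ ∀ j, M ≤ (f j : ℝ))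
        ⊆ {fun _ => t} := by
      intro f hf
      obtain ⟨_, ⟨h1, h2, h3⟩⟩ := Finset.mem_filter.mp hf
      rw [Finset.mem_singleton]
      funext j
      have : f 0 = t := by rw [← h2, Fin.sum_univ_one]
      rw [Subsingleton.elim j 0, this]
    have hrhs : (10 * 2 ^ p) ^ 0 * M ^ (((0:ℕ):ℝ) * (1 - p)) * (t:ℝ) ^ (-p)
        = (t:ℝ) ^ (-p) := by
      norm_num
    rw [hrhs]
    rcases Finset.subset_singleton_iff.mp hsub with h | h
    · rw [h, Finset.sum_empty]; positivity
    · rw [h, Finset.sum_singleton, Fin.prod_univ_one]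
  | succ l IH =>
    intro t ht M hM
    have ht0 : (0:ℝ) < t := by exact_mod_cast ht
    set A := (Fintype.piFinset fun _ : Fin (l + 1 + 1) => Finset.range (t + 1)).filter
        (fun f => (∀ j, 1 ≤ f j) ∧ (∑ j, f j) = t ∧ ∀ j, M ≤ (f j : ℝ)) with hA
    set F : (Fin (l+1+1) → ℕ) → ℝ := fun f => ∏ j, (f j : ℝ) ^ (-p) with hF
    have hmaps : ∀ f ∈ A, f (Fin.last (l+1)) ∈ Finset.range (t+1) := by
      intro f hf
      exact Fintype.mem_piFinset.mp (Finset.mem_filter.mp hf).1 _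
    have hfib := Finset.sum_fiberwise_of_maps_to hmaps F
    rw [show ∑ f ∈ A, F f = ∑ f ∈ A, ∏ j, (f j : ℝ) ^ (-p) from rfl] at hfib
    rw [← hfib]
    set U := (Finset.range (t+1)).filter
        (fun u : ℕ => 1 ≤ u ∧ M ≤ (u:ℝ) ∧ M ≤ ((t - u : ℕ):ℝ) ∧ u + 1 ≤ t) with hU
    -- facts about fibers
    have fiber_facts : ∀ u : ℕ, ∀ f ∈ A.filter (fun f => f (Fin.last (l+1)) = u),
        (∑ j : Fin (l+1), f (Fin.castSucc j)) + u = t ∧ 1 ≤ u ∧ M ≤ (u:ℝ) ∧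
        1 ≤ ∑ j : Fin (l+1), f (Fin.castSucc j) ∧
        M ≤ ((∑ j : Fin (l+1), f (Fin.castSucc j) : ℕ):ℝ) := by
      intro u f hf
      obtain ⟨hfA, hlast⟩ := Finset.mem_filter.mp hf
      obtain ⟨_, h1, h2, h3⟩ := Finset.mem_filter.mp hfA
      have hsum : (∑ j : Fin (l+1), f (Fin.castSucc j)) + u = t := by
        rw [← hlast, ← Fin.sum_univ_castSucc]; exact h2
      have hone : f (Fin.castSucc 0) ≤ ∑ j : Fin (l+1), f (Fin.castSucc j) :=
        Finset.single_le_sum (f := fun j : Fin (l+1) => f (Fin.castSucc j))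
          (fun j _ => Nat.zero_le _) (Finset.mem_univ 0)
      refine ⟨hsum, by rw [← hlast]; exact h1 _, by rw [← hlast]; exact h3 _, ?_, ?_⟩
      · exact le_trans (h1 _) hone
      · exact le_trans (h3 _) (by exact_mod_cast hone)
    have hzero : ∀ u ∈ Finset.range (t+1), u ∉ U →
        ∑ f ∈ A.filter (fun f => f (Fin.last (l+1)) = u), F f = 0 := by
      intro u hu hnu
      have : A.filter (fun f => f (Fin.last (l+1)) = u) = ∅ := by
        apply Finset.eq_empty_of_forall_notMem
        intro f hf
        obtain ⟨hsum, h1, h2, h4, h5⟩ := fiber_facts u f hf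
        apply hnu
        rw [hU, Finset.mem_filter]
        refine ⟨hu, h1, h2, ?_, by omega⟩
        rwa [show t - u = ∑ j : Fin (l+1), f (Fin.castSucc j) by omega]
      rw [this, Finset.sum_empty]
    rw [← Finset.sum_subset (Finset.filter_subset _ _) hzero]
    -- bound each fiber
    have hfiber_bound : ∀ u ∈ U,
        ∑ f ∈ A.filter (fun f => f (Fin.last (l+1)) = u), F f
        ≤ ((10 * 2 ^ p) ^ l * M ^ ((l:ℝ) * (1 - p)) * ((t - u : ℕ):ℝ) ^ (-p)) * (u:ℝ) ^ (-p) := by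
      intro u hu
      obtain ⟨hur, hu1, huM, hutM, hut⟩ := Finset.mem_filter.mp hu
      have step1 : ∑ f ∈ A.filter (fun f => f (Fin.last (l+1)) = u), F f
          = (∑ f ∈ A.filter (fun f => f (Fin.last (l+1)) = u),
              ∏ j : Fin (l+1), (f (Fin.castSucc j) : ℝ) ^ (-p)) * (u:ℝ) ^ (-p) := by
        rw [Finset.sum_mul]
        apply Finset.sum_congr rfl
        intro f hf
        have hlast : f (Fin.last (l+1)) = u := (Finset.mem_filter.mp hf).2
        rw [hF]
        simp only
        rw [Fin.prod_univ_castSucc, hlast]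
      rw [step1]
      apply mul_le_mul_of_nonneg_right _ (Real.rpow_nonneg (Nat.cast_nonneg u) _)
      -- inject into the smaller problem
      set B := (Fintype.piFinset fun _ : Fin (l + 1) => Finset.range ((t - u) + 1)).filter
          (fun g => (∀ j, 1 ≤ g j) ∧ (∑ j, g j) = t - u ∧ ∀ j, M ≤ (g j : ℝ)) with hB
      have himg : ∑ f ∈ A.filter (fun f => f (Fin.last (l+1)) = u),
          ∏ j : Fin (l+1), (f (Fin.castSucc j) : ℝ) ^ (-p)
          ≤ ∑ g ∈ B, ∏ j : Fin (l+1), (g j : ℝ) ^ (-p) := by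
        have hinj : ∀ f1 ∈ A.filter (fun f => f (Fin.last (l+1)) = u),
            ∀ f2 ∈ A.filter (fun f => f (Fin.last (l+1)) = u),
            (fun j : Fin (l+1) => f1 (Fin.castSucc j)) = (fun j : Fin (l+1) => f2 (Fin.castSucc j))
            → f1 = f2 := by
          intro f1 hf1 f2 hf2 h12
          have hl1 : f1 (Fin.last (l+1)) = u := (Finset.mem_filter.mp hf1).2
          have hl2 : f2 (Fin.last (l+1)) = u := (Finset.mem_filter.mp hf2).2
          funext j
          induction j using Fin.lastCases with
          | last => rw [hl1, hl2]
          | cast i => exact congrFun h12 i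
        calc ∑ f ∈ A.filter (fun f => f (Fin.last (l+1)) = u),
              ∏ j : Fin (l+1), (f (Fin.castSucc j) : ℝ) ^ (-p)
            = ∑ g ∈ (A.filter (fun f => f (Fin.last (l+1)) = u)).image
                (fun f : Fin (l+1+1) → ℕ => fun j : Fin (l+1) => f (Fin.castSucc j)),
                ∏ j : Fin (l+1), (g j : ℝ) ^ (-p) :=
              (Finset.sum_image (f := fun g : Fin (l+1) → ℕ => ∏ j, ((g j : ℝ)) ^ (-p)) hinj).symm
          _ ≤ ∑ g ∈ B, ∏ j : Fin (l+1), (g j : ℝ) ^ (-p) := by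
              apply Finset.sum_le_sum_of_subset_of_nonneg
              · intro g hg
                obtain ⟨f, hf, rfl⟩ := Finset.mem_image.mp hg
                obtain ⟨hsum, h1u, h2u, h4, h5⟩ := fiber_facts u f hf
                obtain ⟨hfA, hlast⟩ := Finset.mem_filter.mp hf
                obtain ⟨_, h1, h2, h3⟩ := Finset.mem_filter.mp hfA
                rw [hB, Finset.mem_filter]
                have hsum' : ∑ j : Fin (l+1), f (Fin.castSucc j) = t - u := by omega
                refine ⟨?_, fun j => h1 _, hsum', fun j => h3 _⟩
                rw [Fintype.mem_piFinset]
                intro j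
                rw [Finset.mem_range]
                have : f (Fin.castSucc j) ≤ ∑ k : Fin (l+1), f (Fin.castSucc k) :=
                  Finset.single_le_sum (f := fun k : Fin (l+1) => f (Fin.castSucc k))
                    (fun k _ => Nat.zero_le _) (Finset.mem_univ j)
                omega
              · intro g _ _
                positivity
      have hIH := IH (t - u) (by omega) M hM
      calc ∑ f ∈ A.filter (fun f => f (Fin.last (l+1)) = u),
            ∏ j : Fin (l+1), (f (Fin.castSucc j) : ℝ) ^ (-p)
          ≤ ∑ g ∈ B, ∏ j : Fin (l+1), (g j : ℝ) ^ (-p) := himg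
        _ ≤ (10 * 2 ^ p) ^ l * M ^ ((l:ℝ) * (1 - p)) * ((t - u : ℕ):ℝ) ^ (-p) := hIH
    calc ∑ u ∈ U, ∑ f ∈ A.filter (fun f => f (Fin.last (l+1)) = u), F f
        ≤ ∑ u ∈ U, ((10 * 2 ^ p) ^ l * M ^ ((l:ℝ) * (1 - p)) * ((t - u : ℕ):ℝ) ^ (-p)) * (u:ℝ) ^ (-p) :=
          Finset.sum_le_sum hfiber_bound
      _ = (10 * 2 ^ p) ^ l * M ^ ((l:ℝ) * (1 - p)) *
            ∑ u ∈ U, (u:ℝ) ^ (-p) * ((t - u : ℕ):ℝ) ^ (-p) := by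
          rw [Finset.mul_sum]
          apply Finset.sum_congr rfl
          intro u _
          ring
      _ ≤ (10 * 2 ^ p) ^ l * M ^ ((l:ℝ) * (1 - p)) *
            (10 * 2 ^ p * M ^ ((1:ℝ) - p) * (t:ℝ) ^ (-p)) := by
          apply mul_le_mul_of_nonneg_left (aux_conv19 p hp t ht M hM)
          positivity
      _ = (10 * 2 ^ p) ^ (l+1) * M ^ (((l+1:ℕ):ℝ) * (1 - p)) * (t:ℝ) ^ (-p) := by
          rw [pow_succ]
          rw [show (((l+1:ℕ)):ℝ) * (1 - p) = (l:ℝ) * (1-p) + (1-p) by push_cast; ring,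
            Real.rpow_add hM]
          ring

open DPoly in
/-- A calculus estimate (Lemma B.1). -/
theorem statement19 (d : ℕ) (hd : 3 ≤ d) :
    ∃ c > (0 : ℝ), ∀ t : ℕ, 1 ≤ t → ∀ (l : ℕ) (M : ℝ), 0 < M →
      ∑ f ∈ (Fintype.piFinset fun _ : Fin (l + 1) => Finset.range (t + 1)).filter
          (fun f => (∀ j, 1 ≤ f j) ∧ (∑ j, f j) = t ∧ ∀ j, M ≤ (f j : ℝ)),
        ∏ j, (f j : ℝ) ^ (-(d : ℝ) / 2) ≤
      c ^ l / M ^ ((l : ℝ) * ((d : ℝ) / 2 - 1)) * (t : ℝ) ^ (-(d : ℝ) / 2) := by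
  set p : ℝ := (d:ℝ)/2 with hp_def
  have hp : 3/2 ≤ p := by
    have : (3:ℝ) ≤ d := by exact_mod_cast hd
    rw [hp_def]; linarith
  refine ⟨10 * 2 ^ p, by positivity, ?_⟩
  intro t ht l M hM
  have h := aux_main_claim19 p hp l t ht M hM
  have hexp : (-(d:ℝ)/2) = -p := by rw [hp_def]; ring
  rw [hexp]
  calc ∑ f ∈ (Fintype.piFinset fun _ : Fin (l + 1) => Finset.range (t + 1)).filter
          (fun f => (∀ j, 1 ≤ f j) ∧ (∑ j, f j) = t ∧ ∀ j, M ≤ (f j : ℝ)),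
        ∏ j, (f j : ℝ) ^ (-p)
      ≤ (10 * 2 ^ p) ^ l * M ^ ((l:ℝ) * (1 - p)) * (t:ℝ) ^ (-p) := h
    _ = (10 * 2 ^ p) ^ l / M ^ ((l : ℝ) * (p - 1)) * (t : ℝ) ^ (-p) := by
        rw [show ((l:ℝ)*(1-p)) = -((l:ℝ)*(p-1)) by ring, Real.rpow_neg hM.le, div_eq_mul_inv]
end
end
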